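/- Let {𝒮_j}_{j=1}^q be an orthogonal (Σ_t)_{t∈T}-decorrelating partition. Then for every j ∈ {1,…,q}, the unique maximizer over 𝒮_j of the averaged explained variance β ↦ (1/n)∑_{t∈T} ΔVar_t(β) equals Π_{𝒮_j} Σ̄^{-1} Π_{𝒮_j} c̄, where Σ̄ := (1/n)∑_{t∈T} Σ_t and c̄ := (1/n)∑_{t∈T} Σ_t γ_t. -/

import Mathlib

open Matrix Finset MeasureTheory

noncomputable section

/-- Vectors in `ℝ^p`. -/
abbrev Vec (p : ℕ) : Type := Fin p → ℝ

/-- Real `p × p` matrices. -/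
abbrev Mat (p : ℕ) : Type := Matrix (Fin p) (Fin p) ℝ

/-- Explained variance `ΔVar(β) = 2 γᵀ C β − βᵀ C β` at a time with covariance `C`
and true parameter `γ`. -/
def dVar {p : ℕ} (C : Mat p) (γ β : Vec p) : ℝ :=
  2 * (γ ⬝ᵥ (C *ᵥ β)) - β ⬝ᵥ (C *ᵥ β)

/-- `β₀` is the unique maximizer of `f` over the linear subspace whose orthogonal
projection matrix is `P` (membership in the subspace is expressed as `P *ᵥ β = β`). -/
def IsUMaxOn {p : ℕ} (f : Vec p → ℝ) (P : Mat p) (β₀ : Vec p) : Prop :=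
  P *ᵥ β₀ = β₀ ∧ ∀ β : Vec p, P *ᵥ β = β → β ≠ β₀ → f β < f β₀

/-- The matrices `P j` are the orthogonal projection matrices of a family of pairwise
orthogonal nonzero linear subspaces of `ℝ^p` whose direct sum is `ℝ^p`. -/
structure OrthPartition (p q : ℕ) (P : Fin q → Mat p) : Prop where
  symm : ∀ j, (P j)ᵀ = P j
  idem : ∀ j, P j * P j = P j
  nonzero : ∀ j, P j ≠ 0
  orth : ∀ i j, i ≠ j → P i * P j = 0
  sum_one : ∑ j, P j = 1

/-- For a symmetric matrix `M`, `(M u)⬝v = u⬝(M v)`. -/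
lemma hswap {p : ℕ} (M : Mat p) (hM : Mᵀ = M) (u v : Vec p) :
    (M *ᵥ u) ⬝ᵥ v = u ⬝ᵥ (M *ᵥ v) := by
  rw [dotProduct_mulVec u M v]
  congr 1
  rw [← vecMul_transpose, hM]

lemma hsum_mulVec {p n : ℕ} (M : Fin n → Mat p) (x : Vec p) :
    (∑ t, M t) *ᵥ x = ∑ t, M t *ᵥ x := by
  ext i
  simp only [mulVec, dotProduct, Matrix.sum_apply, Finset.sum_apply, Finset.sum_mul]
  rw [Finset.sum_comm]

lemma hdot_sum {p n : ℕ} (v : Vec p) (w : Fin n → Vec p) :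
    v ⬝ᵥ (∑ t, w t) = ∑ t, v ⬝ᵥ w t := by
  simp only [dotProduct, Finset.sum_apply, Finset.mul_sum]
  rw [Finset.sum_comm]

lemma hsum_dot {p n : ℕ} (v : Vec p) (w : Fin n → Vec p) :
    (∑ t, w t) ⬝ᵥ v = ∑ t, w t ⬝ᵥ v := by
  simp only [dotProduct, Finset.sum_apply, Finset.sum_mul]
  rw [Finset.sum_comm]

/-- first part of Lemma A.7 of the paper: for an orthogonal
`(Σ_t)`-decorrelating partition, the unique maximizer over `𝒮_j` of the averaged
explained variance is `Π_j Σ̄⁻¹ Π_j c̄`, where `Σ̄ = (1/n)∑ Σ_t` and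
`c̄ = (1/n)∑ Σ_t γ_t`. -/
theorem stmt15 {p n q : ℕ} (hp : 1 ≤ p) (hn : 1 ≤ n)
    (Cov : Fin n → Mat p) (hCov : ∀ t, (Cov t).PosDef)
    (γ : Fin n → Vec p)
    (P : Fin q → Mat p) (hP : OrthPartition p q P)
    (hdec : ∀ (t : Fin n) (i j : Fin q), i ≠ j → P i * Cov t * P j = 0) :
    ∀ j : Fin q,
      IsUMaxOn (fun β => (n : ℝ)⁻¹ * ∑ t, dVar (Cov t) (γ t) β) (P j)
        ((P j * ((n : ℝ)⁻¹ • ∑ t, Cov t)⁻¹ * P j) *ᵥ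
          ((n : ℝ)⁻¹ • ∑ t, (Cov t) *ᵥ γ t)) := by
  intro j
  have hnpos : (0:ℝ) < (n:ℝ)⁻¹ := by positivity
  haveI : NeZero n := ⟨by omega⟩
  set S : Mat p := (n : ℝ)⁻¹ • ∑ t, Cov t with hSdef
  set c : Vec p := (n : ℝ)⁻¹ • ∑ t, Cov t *ᵥ γ t with hcdef
  have hsymm : ∀ t, (Cov t)ᵀ = Cov t := fun t => by
    rw [← conjTranspose_eq_transpose_of_trivial]
    exact (hCov t).1
  have hSsymm : Sᵀ = S := by
    rw [hSdef, transpose_smul, transpose_sum]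
    congr 1
    exact Finset.sum_congr rfl fun t _ => hsymm t
  have hSpd : S.PosDef := by
    refine PosDef.of_dotProduct_mulVec_pos ?_ ?_
    · show Sᴴ = S
      rw [conjTranspose_eq_transpose_of_trivial]
      exact hSsymm
    · intro x hx
      have he : star x ⬝ᵥ (S *ᵥ x) = (n:ℝ)⁻¹ * ∑ t, star x ⬝ᵥ (Cov t *ᵥ x) := by
        rw [hSdef, smul_mulVec, dotProduct_smul, hsum_mulVec, hdot_sum]
        simp [smul_eq_mul]
      rw [he]
      exact mul_pos hnpos (Finset.sum_pos (fun t _ => (hCov t).dotProduct_mulVec_pos hx) univ_nonempty)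
  have hdet : IsUnit S.det := hSpd.det_pos.ne'.isUnit
  have hinv : S⁻¹ * S = 1 := nonsing_inv_mul S hdet
  have hinv' : S * S⁻¹ = 1 := mul_nonsing_inv S hdet
  -- commutation of P j with each Cov t
  have hcomm : ∀ t, P j * Cov t = Cov t * P j := by
    intro t
    have h1 : P j * Cov t = P j * Cov t * P j := by
      calc P j * Cov t = P j * Cov t * ∑ i, P i := by rw [hP.sum_one, mul_one]
      _ = ∑ i, P j * Cov t * P i := by rw [Finset.mul_sum]
      _ = P j * Cov t * P j :=
        Finset.sum_eq_single j (fun i _ hij => hdec t j i (Ne.symm hij)) (by simp)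
    have h2 : Cov t * P j = P j * Cov t * P j := by
      calc Cov t * P j = (∑ i, P i) * (Cov t * P j) := by rw [hP.sum_one, one_mul]
      _ = ∑ i, P i * (Cov t * P j) := by rw [Finset.sum_mul]
      _ = P j * (Cov t * P j) :=
        Finset.sum_eq_single j
          (fun i _ hij => by rw [← mul_assoc]; exact hdec t i j hij) (by simp)
      _ = P j * Cov t * P j := (mul_assoc _ _ _).symm
    rw [h1, ← h2]
  have hScomm : P j * S = S * P j := by
    rw [hSdef, Matrix.mul_smul, Matrix.smul_mul]
    congr 1
    rw [Finset.mul_sum, Finset.sum_mul]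
    exact Finset.sum_congr rfl fun t _ => hcomm t
  have hinvcomm : P j * S⁻¹ = S⁻¹ * P j := by
    calc P j * S⁻¹ = S⁻¹ * S * (P j * S⁻¹) := by rw [hinv, one_mul]
    _ = S⁻¹ * (S * P j) * S⁻¹ := by simp only [mul_assoc]
    _ = S⁻¹ * (P j * S) * S⁻¹ := by rw [hScomm]
    _ = S⁻¹ * P j * (S * S⁻¹) := by simp only [mul_assoc]
    _ = S⁻¹ * P j := by rw [hinv', mul_one]
  have hB : P j * S⁻¹ * P j = S⁻¹ * P j := by
    rw [hinvcomm, mul_assoc, hP.idem j]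
  set β₀ : Vec p := (P j * S⁻¹ * P j) *ᵥ c with hβ₀def
  have hPβ₀ : P j *ᵥ β₀ = β₀ := by
    rw [hβ₀def, mulVec_mulVec]
    congr 1
    rw [hB, ← mul_assoc, hB]
  have hSβ₀ : S *ᵥ β₀ = P j *ᵥ c := by
    rw [hβ₀def, mulVec_mulVec]
    congr 1
    rw [hB, ← mul_assoc, hinv', one_mul]
  -- the averaged explained variance
  have hf : ∀ β : Vec p, (n:ℝ)⁻¹ * ∑ t, dVar (Cov t) (γ t) β
      = 2 * (c ⬝ᵥ β) - β ⬝ᵥ (S *ᵥ β) := by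
    intro β
    have e1 : c ⬝ᵥ β = (n:ℝ)⁻¹ * ∑ t, γ t ⬝ᵥ (Cov t *ᵥ β) := by
      rw [hcdef, smul_dotProduct, hsum_dot]
      simp only [smul_eq_mul]
      congr 1
      exact Finset.sum_congr rfl fun t _ => hswap (Cov t) (hsymm t) (γ t) β
    have e2 : β ⬝ᵥ (S *ᵥ β) = (n:ℝ)⁻¹ * ∑ t, β ⬝ᵥ (Cov t *ᵥ β) := by
      rw [hSdef, smul_mulVec, dotProduct_smul, hsum_mulVec, hdot_sum]
      simp [smul_eq_mul]
    rw [e1, e2]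
    simp only [dVar]
    rw [Finset.sum_sub_distrib, ← Finset.mul_sum]
    ring
  have hcβ : ∀ β : Vec p, P j *ᵥ β = β → c ⬝ᵥ β = β₀ ⬝ᵥ (S *ᵥ β) := by
    intro β hβ
    have hPsymm := hP.symm j
    calc c ⬝ᵥ β = c ⬝ᵥ (P j *ᵥ β) := by rw [hβ]
    _ = (P j *ᵥ c) ⬝ᵥ β := (hswap (P j) hPsymm c β).symm
    _ = (S *ᵥ β₀) ⬝ᵥ β := by rw [hSβ₀]
    _ = β₀ ⬝ᵥ (S *ᵥ β) := hswap S hSsymm β₀ β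
  constructor
  · exact hPβ₀
  · intro β hβ hne
    simp only
    rw [hf β, hf β₀]
    have h1 := hcβ β hβ
    have h2 := hcβ β₀ hPβ₀
    have h3 : β ⬝ᵥ (S *ᵥ β₀) = β₀ ⬝ᵥ (S *ᵥ β) := by
      rw [dotProduct_comm]
      exact hswap S hSsymm β₀ β
    have hpos : 0 < (β - β₀) ⬝ᵥ (S *ᵥ (β - β₀)) := by
      have := hSpd.dotProduct_mulVec_pos (sub_ne_zero.mpr hne)
      simpa using this
    have hexp : (β - β₀) ⬝ᵥ (S *ᵥ (β - β₀))
        = β ⬝ᵥ (S *ᵥ β) - β ⬝ᵥ (S *ᵥ β₀) - β₀ ⬝ᵥ (S *ᵥ β) + β₀ ⬝ᵥ (S *ᵥ β₀) := by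
      simp only [mulVec_sub, sub_dotProduct, dotProduct_sub]
      ring
    rw [h1, h2] at *
    nlinarith [hpos, hexp, h3]
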